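/- Proposition 1 (convergence of the relaxed price density to the clearing-price density): let θ_p(x) = Σ_{j∈x} p_j for item-price vectors p ∈ ℝ^m with p ≥ 0. Define N_λ(p) = ∫_𝒱 e^{−λ·Ŵ(θ_p;v)} Q(v) dv, N(p) = ∫_𝒱 1{Ŵ(θ_p;v)=0} Q(v) dv, Z_λ = ∫_{p≥0} N_λ(p) dp, and Z = ∫_{p≥0} N(p) dp. Assume that for some λ₀ > 0 the function (p,v) ↦ e^{−λ₀·Ŵ(θ_p;v)} Q(v) is integrable on {p ∈ ℝ^m : p ≥ 0} × 𝒱, and that 0 < Z < ∞. Then for every p ≥ 0, lim_{λ→∞} N_λ(p)/Z_λ = N(p)/Z; in the paper's notation, lim_{λ→∞} P_λ(θ_p) = P(θ_p). -/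

import Mathlib

open Finset

/-- A bundle is a subset of the `m` items. -/
abbrev Bundle (m : ℕ) := Finset (Fin m)

/-- An allocation is feasible if its bundles are pairwise disjoint. -/
def Feasible {m n : ℕ} (a : Fin n → Bundle m) : Prop :=
  ∀ i j : Fin n, i ≠ j → Disjoint (a i) (a j)

/-- The (finite) set `ℱ` of feasible allocations. -/
noncomputable def FeasSet (m n : ℕ) : Finset (Fin n → Bundle m) :=
  @Finset.filter _ (fun a => Feasible a) (Classical.decPred _) Finset.univ

lemma FeasSet_nonempty (m n : ℕ) : (FeasSet m n).Nonempty :=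
  ⟨fun _ => ∅, by
    simp only [FeasSet, Finset.mem_filter, Finset.mem_univ, true_and]
    intro i j _
    simp⟩

/-- Bidder `i`'s indirect utility `U(θ; v_i) = max_{x ∈ 𝒳} (v_i(x) - θ(x))`. -/
noncomputable def U {m : ℕ} (θ : Bundle m → ℝ) (vi : Bundle m → ℝ) : ℝ :=
  Finset.univ.sup' Finset.univ_nonempty (fun x : Bundle m => vi x - θ x)

/-- The seller's indirect revenue `R(θ) = max_{a ∈ ℱ} Σ_i θ(a_i)`. -/
noncomputable def R (m n : ℕ) (θ : Bundle m → ℝ) : ℝ :=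
  (FeasSet m n).sup' (FeasSet_nonempty m n) (fun a => ∑ i, θ (a i))

/-- The total value `V(a; v) = Σ_i v_i(a_i)`. -/
def V {m n : ℕ} (a : Fin n → Bundle m) (v : Fin n → Bundle m → ℝ) : ℝ :=
  ∑ i, v i (a i)

/-- `W(θ; v) = Σ_i U(θ; v_i) + R(θ)`. -/
noncomputable def W {m n : ℕ} (θ : Bundle m → ℝ) (v : Fin n → Bundle m → ℝ) : ℝ :=
  (∑ i, U θ (v i)) + R m n θ

/-- The optimal social welfare `max_{a ∈ ℱ} V(a; v)`. -/
noncomputable def maxV {m n : ℕ} (v : Fin n → Bundle m → ℝ) : ℝ :=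
  (FeasSet m n).sup' (FeasSet_nonempty m n) (fun a => V a v)

/-- The clearing potential `Ŵ(θ; v) = W(θ; v) - max_{a ∈ ℱ} V(a; v)`. -/
noncomputable def What {m n : ℕ} (θ : Bundle m → ℝ) (v : Fin n → Bundle m → ℝ) : ℝ :=
  W θ v - maxV v

/-- Prices `θ` support a feasible allocation `a`. -/
def Supports {m n : ℕ} (θ : Bundle m → ℝ) (v : Fin n → Bundle m → ℝ)
    (a : Fin n → Bundle m) : Prop :=
  Feasible a ∧ (∀ i : Fin n, ∀ x : Bundle m, v i x - θ x ≤ v i (a i) - θ (a i)) ∧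
  (∀ a' : Fin n → Bundle m, Feasible a' → ∑ i, θ (a' i) ≤ ∑ i, θ (a i))

open MeasureTheory

/-- The space `𝒱` of valuation profiles, as the finite-dimensional real vector space of
maps `({1,…,n} × 𝒳) → ℝ`, equipped with its Borel σ-algebra and Lebesgue measure. -/
abbrev VSpace (m n : ℕ) := (Fin n × Bundle m) → ℝ

/-- Reading a point of `𝒱` as a valuation profile. -/
def toProfile {m n : ℕ} (v : VSpace m n) : Fin n → Bundle m → ℝ :=
  fun i x => v (i, x)

/-- The bundle price function `θ_p(x) = Σ_{j ∈ x} p_j` induced by item prices `p`. -/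
def priceOf {m : ℕ} (p : Fin m → ℝ) : Bundle m → ℝ :=
  fun x => ∑ j ∈ x, p j

/-- Proposition 1: with `N_λ(p) = ∫ e^{-λŴ(θ_p;v)} Q(v) dv`,
`N(p) = ∫ 1{Ŵ(θ_p;v)=0} Q(v) dv`, `Z_λ = ∫_{p≥0} N_λ(p) dp` and `Z = ∫_{p≥0} N(p) dp`,
assuming joint integrability of `(p,v) ↦ e^{-λ₀Ŵ(θ_p;v)} Q(v)` on `{p ≥ 0} × 𝒱` for some
`λ₀ > 0`, integrability of `N` on `{p ≥ 0}` (i.e. `Z < ∞`) and `0 < Z`, we have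
`lim_{λ→∞} N_λ(p)/Z_λ = N(p)/Z` for every `p ≥ 0`. -/

lemma What_nonneg {m n : ℕ} (θ : Bundle m → ℝ) (v : Fin n → Bundle m → ℝ) :
    0 ≤ What θ v := by
  rw [What, sub_nonneg, maxV]
  apply Finset.sup'_le
  intro a ha
  have hfeas : Feasible a := by
    simpa [FeasSet, Finset.mem_filter] using ha
  have h1 : ∀ i : Fin n, v i (a i) - θ (a i) ≤ U θ (v i) := fun i =>
    Finset.le_sup' (fun x : Bundle m => v i x - θ x) (Finset.mem_univ (a i))
  have h2 : ∑ i, θ (a i) ≤ R m n θ := Finset.le_sup' (fun a => ∑ i, θ (a i)) ha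
  calc V a v = ∑ i, (v i (a i) - θ (a i)) + ∑ i, θ (a i) := by
        rw [V, ← Finset.sum_add_distrib]; simp
    _ ≤ (∑ i, U θ (v i)) + R m n θ :=
        add_le_add (Finset.sum_le_sum fun i _ => h1 i) h2
    _ = W θ v := rfl

lemma continuous_What {m n : ℕ} :
    Continuous (fun q : (Fin m → ℝ) × VSpace m n =>
      What (priceOf q.1) (toProfile q.2)) := by
  unfold What W maxV
  apply Continuous.sub
  · apply Continuous.add
    · apply continuous_finset_sum
      intro i _
      unfold U toProfile priceOf
      exact Continuous.finset_sup'_apply _ fun x _ =>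
        ((continuous_apply (i, x)).comp continuous_snd).sub
          (continuous_finset_sum _ fun j _ => (continuous_apply j).comp continuous_fst)
    · unfold R priceOf
      apply Continuous.finset_sup'_apply
      intro a _
      exact continuous_finset_sum _ fun i _ =>
        continuous_finset_sum _ fun j _ => (continuous_apply j).comp continuous_fst
  · apply Continuous.finset_sup'_apply
    intro a _
    unfold V toProfile
    exact continuous_finset_sum _ fun i _ => (continuous_apply (i, a i)).comp continuous_snd


lemma continuous_What_right {m n : ℕ} (p : Fin m → ℝ) :
    Continuous (fun v : VSpace m n => What (priceOf p) (toProfile v)) := by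
  unfold What W maxV
  apply Continuous.sub
  · apply Continuous.add
    · apply continuous_finset_sum
      intro i _
      unfold U toProfile
      exact Continuous.finset_sup'_apply _ fun x _ =>
        (continuous_apply (i, x)).sub continuous_const
    · exact continuous_const
  · apply Continuous.finset_sup'_apply
    intro a _
    unfold V toProfile
    exact continuous_finset_sum _ fun i _ => continuous_apply (i, a i)

set_option maxHeartbeats 1600000 in
theorem relaxed_price_density_convergence {m n : ℕ} (hm : 1 ≤ m) (hn : 1 ≤ n)
    (Q : VSpace m n → ℝ) (hQ0 : ∀ v, 0 ≤ Q v) (hQint : Integrable Q)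
    (Nl : ℝ → (Fin m → ℝ) → ℝ)
    (hNl : ∀ lam p, Nl lam p =
      ∫ v : VSpace m n, Real.exp (-lam * What (priceOf p) (toProfile v)) * Q v)
    (N : (Fin m → ℝ) → ℝ)
    (hN : ∀ p, N p =
      ∫ v : VSpace m n, (if What (priceOf p) (toProfile v) = 0 then (1 : ℝ) else 0) * Q v)
    (lam0 : ℝ) (hlam0 : 0 < lam0)
    (hjoint : IntegrableOn
      (fun q : (Fin m → ℝ) × VSpace m n =>
        Real.exp (-lam0 * What (priceOf q.1) (toProfile q.2)) * Q q.2)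
      ({p : Fin m → ℝ | ∀ j, 0 ≤ p j} ×ˢ (Set.univ : Set (VSpace m n))))
    (hNint : IntegrableOn N {p : Fin m → ℝ | ∀ j, 0 ≤ p j})
    (hZpos : 0 < ∫ p in {p : Fin m → ℝ | ∀ j, 0 ≤ p j}, N p) :
    ∀ p : Fin m → ℝ, (∀ j, 0 ≤ p j) →
      Filter.Tendsto
        (fun lam : ℝ =>
          Nl lam p / ∫ p' in {p' : Fin m → ℝ | ∀ j, 0 ≤ p' j}, Nl lam p')
        Filter.atTop
        (nhds (N p / ∫ p' in {p' : Fin m → ℝ | ∀ j, 0 ≤ p' j}, N p')) := by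
  classical
  set S : Set (Fin m → ℝ) := {p : Fin m → ℝ | ∀ j, 0 ≤ p j} with hS
  -- the clearing potential as a function
  have hw0 : ∀ (p : Fin m → ℝ) (v : VSpace m n),
      0 ≤ What (priceOf p) (toProfile v) := fun p v => What_nonneg _ _
  have hwc : ∀ p : Fin m → ℝ,
      Continuous (fun v : VSpace m n => What (priceOf p) (toProfile v)) := fun p =>
    continuous_What_right p
  -- integrability in v of the integrand, for each lam ≥ 0 and each p
  have haesm : ∀ (lam : ℝ) (p : Fin m → ℝ),
      AEStronglyMeasurable (fun v : VSpace m n => Real.exp (-lam * What (priceOf p) (toProfile v)) * Q v) volume :=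
    fun lam p => ((Real.continuous_exp.comp
      ((continuous_const.mul (hwc p)))).aestronglyMeasurable).mul hQint.aestronglyMeasurable
  have hbv : ∀ (lam : ℝ), 0 ≤ lam → ∀ (p : Fin m → ℝ) (v : VSpace m n),
      ‖Real.exp (-lam * What (priceOf p) (toProfile v)) * Q v‖ ≤ Q v := by
    intro lam hlam p v
    rw [Real.norm_eq_abs, abs_mul, abs_of_nonneg (Real.exp_pos _).le, abs_of_nonneg (hQ0 v)]
    have hle : Real.exp (-lam * What (priceOf p) (toProfile v)) ≤ 1 :=
      Real.exp_le_one_iff.mpr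
        (mul_nonpos_of_nonpos_of_nonneg (neg_nonpos.mpr hlam) (hw0 p v))
    calc Real.exp (-lam * What (priceOf p) (toProfile v)) * Q v ≤ 1 * Q v :=
          mul_le_mul_of_nonneg_right hle (hQ0 v)
      _ = Q v := one_mul _
  have hintv : ∀ (lam : ℝ), 0 ≤ lam → ∀ p : Fin m → ℝ,
      Integrable (fun v : VSpace m n => Real.exp (-lam * What (priceOf p) (toProfile v)) * Q v) volume :=
    fun lam hlam p => Integrable.mono hQint (haesm lam p)
      (Filter.Eventually.of_forall fun v => by
        simpa [Real.norm_eq_abs, abs_of_nonneg (hQ0 v)] using hbv lam hlam p v)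
  -- Step A : pointwise convergence of Nl lam p to N p, for every p
  have hA : ∀ p : Fin m → ℝ, Filter.Tendsto (fun lam : ℝ => Nl lam p)
      Filter.atTop (nhds (N p)) := by
    intro p
    have key := MeasureTheory.tendsto_integral_filter_of_dominated_convergence
      (μ := (volume : Measure (VSpace m n))) (l := Filter.atTop)
      (F := fun (lam : ℝ) (v : VSpace m n) => Real.exp (-lam * What (priceOf p) (toProfile v)) * Q v)
      (f := fun v : VSpace m n => (if What (priceOf p) (toProfile v) = 0 then (1 : ℝ) else 0) * Q v)
      (bound := Q)
      (Filter.Eventually.of_forall fun lam => haesm lam p)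
      (by
        filter_upwards [Filter.eventually_ge_atTop (0 : ℝ)] with lam hlam
        exact Filter.Eventually.of_forall fun v => hbv lam hlam p v)
      hQint
      (by
        refine Filter.Eventually.of_forall fun v => ?_
        show Filter.Tendsto
          (fun lam : ℝ => Real.exp (-lam * What (priceOf p) (toProfile v)) * Q v)
          Filter.atTop
          (nhds ((if What (priceOf p) (toProfile v) = 0 then (1 : ℝ) else 0) * Q v))
        rcases eq_or_lt_of_le (hw0 p v) with h0 | h0
        · rw [← h0]
          simpa using (tendsto_const_nhds :
            Filter.Tendsto (fun _ : ℝ => Q v) Filter.atTop (nhds (Q v)))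
        · rw [if_neg (ne_of_gt h0)]
          have h1 : Filter.Tendsto (fun lam : ℝ => -lam * What (priceOf p) (toProfile v))
              Filter.atTop Filter.atBot := by
            have := (Filter.Tendsto.atTop_mul_const_of_neg
              (neg_lt_zero.mpr h0) (Filter.tendsto_id (α := ℝ) (x := Filter.atTop)))
            exact this.congr fun x => by simp only [id_eq]; ring
          have := (Real.tendsto_exp_atBot.comp h1).mul_const (Q v)
          simpa using this)
    have : (fun lam : ℝ => Nl lam p) = fun lam : ℝ =>
        ∫ v : VSpace m n, Real.exp (-lam * What (priceOf p) (toProfile v)) * Q v := by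
      funext lam; exact hNl lam p
    rw [this, hN p]
    exact key
  -- joint integrability over the restricted product measure
  have hjoint' : Integrable
      (fun q : (Fin m → ℝ) × VSpace m n => Real.exp (-lam0 * What (priceOf q.1) (toProfile q.2)) * Q q.2)
      ((volume.restrict S).prod volume) := by
    have h := hjoint
    rw [IntegrableOn, Measure.volume_eq_prod, ← Measure.prod_restrict,
      Measure.restrict_univ] at h
    exact h
  -- joint a.e.-strong measurability for every lam
  have hjaesm : ∀ lam : ℝ, AEStronglyMeasurable
      (fun q : (Fin m → ℝ) × VSpace m n => Real.exp (-lam * What (priceOf q.1) (toProfile q.2)) * Q q.2)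
      ((volume.restrict S).prod volume) := by
    intro lam
    exact ((Real.continuous_exp.comp
      (continuous_const.mul continuous_What)).aestronglyMeasurable).mul
      (hQint.aestronglyMeasurable.comp_snd)
  -- joint integrability for every lam ≥ lam0
  have hjint : ∀ lam : ℝ, lam0 ≤ lam → Integrable
      (fun q : (Fin m → ℝ) × VSpace m n => Real.exp (-lam * What (priceOf q.1) (toProfile q.2)) * Q q.2)
      ((volume.restrict S).prod volume) := by
    intro lam hlam
    refine Integrable.mono hjoint' (hjaesm lam) (Filter.Eventually.of_forall fun q => ?_)
    rw [Real.norm_eq_abs, Real.norm_eq_abs, abs_mul, abs_mul,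
      abs_of_nonneg (Real.exp_pos _).le, abs_of_nonneg (Real.exp_pos _).le]
    exact mul_le_mul_of_nonneg_right
      (Real.exp_le_exp.mpr (by nlinarith [hw0 q.1 q.2])) (abs_nonneg _)
  -- Step B : convergence of Z_lam to Z
  have hB : Filter.Tendsto (fun lam : ℝ => ∫ p' in S, Nl lam p')
      Filter.atTop (nhds (∫ p' in S, N p')) := by
    refine MeasureTheory.tendsto_integral_filter_of_dominated_convergence
      (μ := volume.restrict S) (l := Filter.atTop)
      (F := fun (lam : ℝ) (p' : Fin m → ℝ) => Nl lam p')
      (f := N)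
      (bound := fun p' => Nl lam0 p') ?_ ?_ ?_ ?_
    · filter_upwards [Filter.eventually_ge_atTop lam0] with lam hlam
      have := (hjint lam hlam).integral_prod_left
      refine this.aestronglyMeasurable.congr ?_
      exact Filter.Eventually.of_forall fun p' => (hNl lam p').symm
    · filter_upwards [Filter.eventually_ge_atTop lam0] with lam hlam
      refine Filter.Eventually.of_forall fun p' => ?_
      have hlam' : (0:ℝ) ≤ lam := le_trans hlam0.le hlam
      have h1 : 0 ≤ Nl lam p' := by
        rw [hNl]
        exact MeasureTheory.integral_nonneg fun v =>
          mul_nonneg (Real.exp_pos _).le (hQ0 v)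
      have h2 : Nl lam p' ≤ Nl lam0 p' := by
        rw [hNl, hNl]
        refine MeasureTheory.integral_mono (hintv lam hlam' p') (hintv lam0 hlam0.le p')
          fun v => mul_le_mul_of_nonneg_right
            (Real.exp_le_exp.mpr (by nlinarith [hw0 p' v])) (hQ0 v)
      rw [Real.norm_eq_abs, abs_of_nonneg h1]
      exact h2
    · have := hjoint'.integral_prod_left
      refine this.congr ?_
      exact Filter.Eventually.of_forall fun p' => (hNl lam0 p').symm
    · exact Filter.Eventually.of_forall fun p' => hA p'
  intro p hp
  exact Filter.Tendsto.div (hA p) hB (ne_of_gt hZpos)
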